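/- Let X_μ ~ ESN(μ, σ², ε) with 0 < μ < c, σ > 0, ε ∈ (−1,1), Z_μ = max(X_μ, 0), and Z̄_μ = min(Z_μ, c). Then E[Z_μ − Z̄_μ] = (1−ε)²·φ((c−μ)/((1−ε)σ))·σ − (1−ε)·[1 − Φ((c−μ)/((1−ε)σ))]·(c−μ). -/

import Mathlib

open MeasureTheory Real Set ProbabilityTheory

open Filter Topology

noncomputable def phi (t : ℝ) : ℝ := Real.exp (-t^2/2) / Real.sqrt (2*Real.pi)
noncomputable def Phi (t : ℝ) : ℝ := ∫ u in Set.Iic t, phi u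

lemma continuous_phi : Continuous phi := by
  unfold phi; fun_prop

lemma integrable_phi : Integrable phi := by
  have h := (integrable_exp_neg_mul_sq (by norm_num : (0:ℝ) < 2⁻¹)).div_const
      (Real.sqrt (2*Real.pi))
  refine h.congr (Filter.Eventually.of_forall fun x => ?_)
  unfold phi; ring_nf

lemma integral_phi : ∫ x, phi x = 1 := by
  have h : ∫ x : ℝ, Real.exp (-(2⁻¹) * x^2) = Real.sqrt (Real.pi / 2⁻¹) :=
    integral_gaussian 2⁻¹
  have h2 : (fun x : ℝ => phi x) = fun x => Real.exp (-(2⁻¹) * x^2) / Real.sqrt (2*Real.pi) := by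
    funext x; unfold phi; ring_nf
  rw [h2, integral_div, h]
  rw [show Real.pi / 2⁻¹ = 2 * Real.pi by ring]
  rw [div_self]
  positivity

lemma hasDerivAt_phi (x : ℝ) : HasDerivAt phi (-x * phi x) x := by
  have h1 : HasDerivAt (fun t : ℝ => -t^2/2) (-x) x := by
    have := ((hasDerivAt_pow 2 x).neg).div_const 2
    exact this.congr_deriv (by ring)
  have h2 := (Real.hasDerivAt_exp (-x^2/2)).comp x h1
  have h3 := h2.div_const (Real.sqrt (2*Real.pi))
  exact h3.congr_deriv (by unfold phi; ring)

lemma hasDerivAt_Phi (x : ℝ) : HasDerivAt Phi (phi x) x := by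
  have heq : ∀ y : ℝ, Phi y = Phi 0 + ∫ t in (0:ℝ)..y, phi t := by
    intro y
    have := intervalIntegral.integral_Iic_sub_Iic
      (integrable_phi.integrableOn (s := Iic 0)) (integrable_phi.integrableOn (s := Iic y))
    unfold Phi; linarith [this]
  have hd : HasDerivAt (fun y => Phi 0 + ∫ t in (0:ℝ)..y, phi t) (phi x) x := by
    refine HasDerivAt.const_add _ ?_
    exact intervalIntegral.integral_hasDerivAt_right
      (integrable_phi.intervalIntegrable)
      (continuous_phi.stronglyMeasurable.stronglyMeasurableAtFilter)
      continuous_phi.continuousAt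
  exact hd.congr_of_eventuallyEq (Filter.Eventually.of_forall heq)

lemma tendsto_Phi_atTop : Tendsto Phi atTop (𝓝 1) := by
  have h := (MeasureTheory.aecover_Iic (μ := volume) (tendsto_id (α := ℝ))).integral_tendsto_of_countably_generated integrable_phi
  rwa [integral_phi] at h

lemma tendsto_phi_atTop : Tendsto phi atTop (𝓝 0) := by
  have h1 : Tendsto (fun x : ℝ => -x^2/2) atTop atBot := by
    apply Tendsto.atBot_div_const (by norm_num : (0:ℝ) < 2)
    exact tendsto_neg_atTop_atBot.comp (tendsto_pow_atTop (by norm_num : 2 ≠ 0))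
  have h2 : Tendsto (fun x : ℝ => Real.exp (-x^2/2)) atTop (𝓝 0) :=
    Real.tendsto_exp_atBot.comp h1
  have h3 := h2.div_const (Real.sqrt (2*Real.pi))
  have h4 : (fun x : ℝ => Real.exp (-x^2/2) / Real.sqrt (2*Real.pi)) = phi := rfl
  rw [h4] at h3
  simpa using h3

noncomputable def esnPdf (μ σ ε x : ℝ) : ℝ :=
  if x < μ then phi ((x-μ) / ((1+ε)*σ)) / σ else phi ((x-μ) / ((1-ε)*σ)) / σ

theorem stmt10 (μ σ ε c : ℝ) (hμ : 0 < μ) (hμc : μ < c) (hσ : 0 < σ)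
    (hε1 : -1 < ε) (hε2 : ε < 1) :
    (∫ x : ℝ, (max x 0 - min (max x 0) c) * esnPdf μ σ ε x)
      = (1-ε)^2 * phi ((c-μ)/((1-ε)*σ)) * σ
        - (1-ε) * (1 - Phi ((c-μ)/((1-ε)*σ))) * (c-μ) := by
  set s : ℝ := (1-ε)*σ with hs_def
  have hs : 0 < s := mul_pos (by linarith) hσ
  clear_value s
  have hc0 : (0:ℝ) < c := lt_trans hμ hμc
  set f' : ℝ → ℝ := fun x => (x - c) * (phi ((x-μ)/s) / σ) with hf'_def
  -- Step 1: rewrite integrand as indicator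
  have key : (fun x : ℝ => (max x 0 - min (max x 0) c) * esnPdf μ σ ε x)
      = Set.indicator (Ioi c) f' := by
    funext x
    by_cases hx : c < x
    · rw [Set.indicator_of_mem (show x ∈ Ioi c from hx)]
      have h0 : (0:ℝ) ≤ x := by linarith
      have hxm : ¬ x < μ := by linarith
      rw [hf'_def]
      simp only [esnPdf, if_neg hxm, max_eq_left h0, min_eq_right (le_of_lt hx), hs_def]
    · rw [Set.indicator_of_notMem (show x ∉ Ioi c from hx)]
      have hxc : x ≤ c := not_lt.mp hx
      have hmin : min (max x 0) c = max x 0 := min_eq_left (max_le hxc hc0.le)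
      rw [hmin]; ring
  rw [key, MeasureTheory.integral_indicator measurableSet_Ioi]
  -- Step 2: FTC on (c, ∞)
  set F : ℝ → ℝ := fun x => -(s*s/σ) * phi ((x-μ)/s) - ((c-μ)*s/σ) * Phi ((x-μ)/s) with hF_def
  have hderiv : ∀ x ∈ Ici c, HasDerivAt F (f' x) x := by
    intro x _
    have h1 : HasDerivAt (fun y : ℝ => (y - μ)/s) (1/s) x := by
      simpa using ((hasDerivAt_id x).sub_const μ).div_const s
    have h2 : HasDerivAt (fun y : ℝ => phi ((y-μ)/s))
        (-((x-μ)/s) * phi ((x-μ)/s) * (1/s)) x := by have := (hasDerivAt_phi ((x-μ)/s)).comp x h1; exact this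
    have h3 : HasDerivAt (fun y : ℝ => Phi ((y-μ)/s))
        (phi ((x-μ)/s) * (1/s)) x := by have := (hasDerivAt_Phi ((x-μ)/s)).comp x h1; exact this
    have h4 := (h2.const_mul (-(s*s/σ))).sub (h3.const_mul ((c-μ)*s/σ))
    refine h4.congr_deriv ?_
    rw [hf'_def]
    field_simp
    ring
  have hint : IntegrableOn f' (Ioi c) := by
    have A : Integrable (fun y : ℝ => y * phi (y/s)) := by
      have hb : (0:ℝ) < 1/(2*s^2) := by positivity
      have h := (integrable_mul_exp_neg_mul_sq hb).div_const (Real.sqrt (2*Real.pi))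
      refine h.congr (Filter.Eventually.of_forall fun y => ?_)
      simp only [phi]
      rw [show -(y/s)^2/2 = -(1/(2*s^2)) * y^2 by rw [div_pow]; ring]
      ring
    have A' : Integrable (fun x : ℝ => (x-μ) * phi ((x-μ)/s)) := A.comp_sub_right μ
    have B : Integrable (fun x : ℝ => phi ((x-μ)/s)) :=
      (integrable_phi.comp_div hs.ne').comp_sub_right μ
    have C : Integrable f' := by
      refine ((A'.div_const σ).sub (B.const_mul ((c-μ)/σ))).congr
        (Filter.Eventually.of_forall fun x => ?_)
      simp only [Pi.sub_apply]
      rw [hf'_def]; ring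
    exact C.integrableOn
  have htend : Filter.Tendsto F Filter.atTop (𝓝 (-((c-μ)*s/σ))) := by
    have haff : Filter.Tendsto (fun x : ℝ => (x-μ)/s) Filter.atTop Filter.atTop := by
      apply Filter.Tendsto.atTop_div_const hs
      simpa [sub_eq_add_neg] using Filter.tendsto_atTop_add_const_right Filter.atTop (-μ) Filter.tendsto_id
    have t1 : Filter.Tendsto (fun x : ℝ => phi ((x-μ)/s)) Filter.atTop (𝓝 0) :=
      tendsto_phi_atTop.comp haff
    have t2 : Filter.Tendsto (fun x : ℝ => Phi ((x-μ)/s)) Filter.atTop (𝓝 1) :=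
      tendsto_Phi_atTop.comp haff
    have h5 := (t1.const_mul (-(s*s/σ))).sub (t2.const_mul ((c-μ)*s/σ))
    rw [show -(s*s/σ) * (0:ℝ) - ((c-μ)*s/σ) * 1 = -((c-μ)*s/σ) by ring] at h5
    exact h5
  rw [MeasureTheory.integral_Ioi_of_hasDerivAt_of_tendsto' hderiv hint htend]
  rw [hF_def]
  simp only
  rw [hs_def]
  field_simp
  ring
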